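/- Let (X,d) be an unbounded metric space and p ∈ X. The following statements are equivalent: (i) the set S_p(X) is strongly porous at infinity; (ii) there is a single-point tangent space Ω_{∞,r̃}^X; (iii) there is a finite tangent space Ω_{∞,r̃}^X; (iv) there is a compact tangent space Ω_{∞,r̃}^X; (v) there is a bounded, separable tangent space Ω_{∞,r̃}^X. -/

import Mathlib

open Filter Topology

/-- A scaling sequence: a sequence of positive reals tending to infinity. -/
def ScalingSeq (r : ℕ → ℝ) : Prop :=
  (∀ n, 0 < r n) ∧ Tendsto r atTop atTop

/-- `x ∈ X̃_{∞,r̃}`: the sequence `x` satisfies `d(x_n,p) → ∞` and the finite limit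
`d̃_r̃(x̃) = lim d(x_n,p)/r_n` exists.  Here `d` is the distance function of the space. -/
def SeqAdm {Y : Type*} (d : Y → Y → ℝ) (p : Y) (r : ℕ → ℝ) (x : ℕ → Y) : Prop :=
  Tendsto (fun n => d (x n) p) atTop atTop ∧
  ∃ L : ℝ, Tendsto (fun n => d (x n) p / r n) atTop (𝓝 L)

/-- The equivalence `x̃ ≡ ỹ ⇔ lim d(x_n,y_n)/r_n = 0`. -/
def SeqEquiv {Y : Type*} (d : Y → Y → ℝ) (r : ℕ → ℝ) (x y : ℕ → Y) : Prop :=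
  Tendsto (fun n => d (x n) (y n) / r n) atTop (𝓝 0)

/-- Mutual stability: the limit `lim d(x_n,y_n)/r_n` exists (and is finite). -/
def MutStable {Y : Type*} (d : Y → Y → ℝ) (r : ℕ → ℝ) (x y : ℕ → Y) : Prop :=
  ∃ L : ℝ, Tendsto (fun n => d (x n) (y n) / r n) atTop (𝓝 L)

/-- A set of sequences representing a clique in the graph `G_{X,r̃}`: all members are
admissible, the set is a union of equivalence classes, and all members are pairwise
mutually stable. -/
def IsCliqueSet {Y : Type*} (d : Y → Y → ℝ) (p : Y) (r : ℕ → ℝ) (C : Set (ℕ → Y)) : Prop :=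
  (∀ x ∈ C, SeqAdm d p r x) ∧
  (∀ x ∈ C, ∀ y, SeqAdm d p r y → SeqEquiv d r x y → y ∈ C) ∧
  (∀ x ∈ C, ∀ y ∈ C, MutStable d r x y)

/-- A pretangent space `Ω^X_{∞,r̃}`, encoded as the (union of the) maximal clique of the
graph `G_{X,r̃}`. -/
def IsPretangent {Y : Type*} (d : Y → Y → ℝ) (p : Y) (r : ℕ → ℝ) (C : Set (ℕ → Y)) : Prop :=
  IsCliqueSet d p r C ∧ ∀ D, IsCliqueSet d p r D → C ⊆ D → D = C

/-- The point `α₀ = α₀(X,r̃)`: the class of admissible sequences with `d̃_r̃(x̃) = 0`. -/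
def alphaZero {Y : Type*} (d : Y → Y → ℝ) (p : Y) (r : ℕ → ℝ) : Set (ℕ → Y) :=
  {x | SeqAdm d p r x ∧ Tendsto (fun n => d (x n) p / r n) atTop (𝓝 0)}

/-- The metric `ρ` of a pretangent space: `ρ(α,β) = lim d(x_n,y_n)/r_n`. -/
noncomputable def seqDist {Y : Type*} (d : Y → Y → ℝ) (r : ℕ → ℝ) (x y : ℕ → Y) : ℝ :=
  limUnder atTop (fun n => d (x n) (y n) / r n)

/-- The image `em'(C)` of a clique `C` of `G_{X,r̃}` in `G_{X,r̃'}` (as a union of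
equivalence classes), where `r̃' = (r_{n_k})`. -/
def subImage {Y : Type*} (d : Y → Y → ℝ) (p : Y) (r' : ℕ → ℝ) (nk : ℕ → ℕ)
    (C : Set (ℕ → Y)) : Set (ℕ → Y) :=
  {y | SeqAdm d p r' y ∧ ∃ x ∈ C, SeqEquiv d r' (fun k => x (nk k)) y}

/-- A pretangent space `Ω^X_{∞,r̃}` is tangent if `em'(Ω^X_{∞,r̃})` is a maximal clique
of `G_{X,r̃'}` for every infinite strictly increasing `(n_k) ⊆ ℕ`. -/
def IsTangent {Y : Type*} (d : Y → Y → ℝ) (p : Y) (r : ℕ → ℝ) (C : Set (ℕ → Y)) : Prop :=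
  IsPretangent d p r C ∧
  ∀ nk : ℕ → ℕ, StrictMono nk →
    IsPretangent d p (fun k => r (nk k)) (subImage d p (fun k => r (nk k)) nk C)


/-- `l(∞,h,E)`: the length of the longest interval contained in `[0,h] \ E`. -/
noncomputable def gapLen (E : Set ℝ) (h : ℝ) : ℝ :=
  sSup {d : ℝ | ∃ a b : ℝ, a ≤ b ∧ d = b - a ∧ Set.Ioo a b ⊆ Set.Icc 0 h \ E}

/-- The porosity of `E ⊆ ℝ⁺` at infinity: `p(E,∞) = limsup_{h→∞} l(∞,h,E)/h`. -/
noncomputable def porosityAtInfty (E : Set ℝ) : ℝ :=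
  Filter.limsup (fun h => gapLen E h / h) atTop

/-- `E` is strongly porous at infinity if `p(E,∞) = 1`. -/
def StronglyPorousAtInfty (E : Set ℝ) : Prop :=
  porosityAtInfty E = 1

section basic
variable {X : Type*} [MetricSpace X] {p : X} {r : ℕ → ℝ}

lemma seqEquiv_refl (x : ℕ → X) : SeqEquiv dist r x x := by
  have : (fun n => dist (x n) (x n) / r n) = fun _ => 0 := by
    funext n; simp
  rw [SeqEquiv, this]; exact tendsto_const_nhds

lemma seqEquiv_symm {x y : ℕ → X} (h : SeqEquiv dist r x y) : SeqEquiv dist r y x :=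
  h.congr (fun n => by rw [dist_comm])

lemma dist_div_nonneg (hr : ∀ n, 0 < r n) (x y : ℕ → X) (n : ℕ) :
    0 ≤ dist (x n) (y n) / r n :=
  div_nonneg dist_nonneg (hr n).le

lemma seqEquiv_trans (hr : ∀ n, 0 < r n) {x y z : ℕ → X}
    (h1 : SeqEquiv dist r x y) (h2 : SeqEquiv dist r y z) : SeqEquiv dist r x z := by
  have hsq : ∀ n, dist (x n) (z n) / r n ≤ dist (x n) (y n) / r n + dist (y n) (z n) / r n := by
    intro n
    rw [← add_div, div_le_div_iff_of_pos_right (hr n)]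
    · exact dist_triangle _ _ _
  have := h1.add h2
  rw [add_zero] at this
  exact squeeze_zero (dist_div_nonneg hr x z) hsq this

/-- transfer a distance limit along equivalences -/
lemma tendsto_dist_congr (hr : ∀ n, 0 < r n) {x y x' y' : ℕ → X} {L : ℝ}
    (h : Tendsto (fun n => dist (x n) (y n) / r n) atTop (𝓝 L))
    (hx : SeqEquiv dist r x x') (hy : SeqEquiv dist r y y') :
    Tendsto (fun n => dist (x' n) (y' n) / r n) atTop (𝓝 L) := by
  have hdiff : Tendsto
      (fun n => dist (x' n) (y' n) / r n - dist (x n) (y n) / r n) atTop (𝓝 0) := by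
    apply squeeze_zero_norm (a := fun n => dist (x n) (x' n) / r n + dist (y n) (y' n) / r n)
    · intro n
      have h1 : |dist (x' n) (y' n) - dist (x n) (y n)| ≤
          dist (x n) (x' n) + dist (y n) (y' n) := by
        have a1 := abs_dist_sub_le (x' n) (x n) (y' n)
        have a2 := abs_dist_sub_le (y' n) (y n) (x n)
        calc |dist (x' n) (y' n) - dist (x n) (y n)|
            ≤ |dist (x' n) (y' n) - dist (x n) (y' n)| +
              |dist (x n) (y' n) - dist (x n) (y n)| := abs_sub_le _ _ _
          _ ≤ dist (x n) (x' n) + dist (y n) (y' n) := by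
              apply add_le_add
              · rw [dist_comm (x n) (x' n)]; exact a1
              · rw [dist_comm (x n) (y' n), dist_comm (x n) (y n), dist_comm (y n) (y' n)]
                exact a2
      rw [Real.norm_eq_abs, div_sub_div_same, abs_div, abs_of_pos (hr n), ← add_div]
      exact div_le_div_of_nonneg_right h1 (hr n).le
    · have := hx.add hy; rw [add_zero] at this; exact this
  have := h.add hdiff
  rw [add_zero] at this
  exact this.congr (fun n => by ring)

end basic

section gaps

/-- interior bounds of a nonempty open interval inside `Icc 0 h`. -/
lemma Ioo_bounds {a b h : ℝ} (hab : a < b) (hsub : Set.Ioo a b ⊆ Set.Icc 0 h) :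
    0 ≤ a ∧ b ≤ h := by
  constructor
  · by_contra hc
    push_neg at hc
    have hmin : a < min b 0 := lt_min hab hc
    set z := (a + min b 0) / 2 with hz
    have h1 : a < z := by rw [hz]; linarith
    have h2 : z < min b 0 := by rw [hz]; linarith
    have hzI : z ∈ Set.Ioo a b := ⟨h1, lt_of_lt_of_le h2 (min_le_left _ _)⟩
    have := (hsub hzI).1
    have : z < 0 := lt_of_lt_of_le h2 (min_le_right _ _)
    linarith [(hsub hzI).1]
  · by_contra hc
    push_neg at hc
    have hmax : max a h < b := max_lt hab hc
    set z := (max a h + b) / 2 with hz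
    have h1 : max a h < z := by rw [hz]; linarith
    have h2 : z < b := by rw [hz]; linarith
    have hzI : z ∈ Set.Ioo a b := ⟨lt_of_le_of_lt (le_max_left _ _) h1, h2⟩
    have := (hsub hzI).2
    have : h < z := lt_of_le_of_lt (le_max_right _ _) h1
    linarith [(hsub hzI).2]

lemma gapLen_zero_mem (E : Set ℝ) (h : ℝ) :
    (0 : ℝ) ∈ {d : ℝ | ∃ a b : ℝ, a ≤ b ∧ d = b - a ∧ Set.Ioo a b ⊆ Set.Icc 0 h \ E} :=
  ⟨0, 0, le_refl _, by ring, by simp⟩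

lemma gapLen_bddAbove (E : Set ℝ) (h : ℝ) :
    BddAbove {d : ℝ | ∃ a b : ℝ, a ≤ b ∧ d = b - a ∧ Set.Ioo a b ⊆ Set.Icc 0 h \ E} := by
  refine ⟨max h 0, fun d hd => ?_⟩
  obtain ⟨a, b, hab, rfl, hsub⟩ := hd
  rcases eq_or_lt_of_le hab with rfl | hab'
  · simp
  · obtain ⟨ha, hb⟩ := Ioo_bounds hab' (fun z hz => (hsub hz).1)
    have : b - a ≤ h := by linarith
    exact this.trans (le_max_left _ _)

lemma gapLen_nonneg (E : Set ℝ) (h : ℝ) : 0 ≤ gapLen E h :=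
  le_csSup (gapLen_bddAbove E h) (gapLen_zero_mem E h)

lemma gapLen_le (E : Set ℝ) {h : ℝ} (h0 : 0 ≤ h) : gapLen E h ≤ h := by
  apply csSup_le ⟨0, gapLen_zero_mem E h⟩
  rintro d ⟨a, b, hab, rfl, hsub⟩
  rcases eq_or_lt_of_le hab with rfl | hab'
  · linarith
  · obtain ⟨ha, hb⟩ := Ioo_bounds hab' (fun z hz => (hsub hz).1)
    linarith

lemma le_gapLen (E : Set ℝ) {a b h : ℝ} (hab : a ≤ b)
    (hsub : Set.Ioo a b ⊆ Set.Icc 0 h \ E) : b - a ≤ gapLen E h :=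
  le_csSup (gapLen_bddAbove E h) ⟨a, b, hab, rfl, hsub⟩

lemma exists_gap {E : Set ℝ} {h c : ℝ} (hc : c < gapLen E h) :
    ∃ a b : ℝ, a ≤ b ∧ Set.Ioo a b ⊆ Set.Icc 0 h \ E ∧ c < b - a := by
  obtain ⟨d, hd, hcd⟩ := exists_lt_of_lt_csSup ⟨0, gapLen_zero_mem E h⟩ hc
  obtain ⟨a, b, hab, rfl, hsub⟩ := hd
  exact ⟨a, b, hab, hsub, hcd⟩

end gaps

section unbounded
variable {X : Type*} [MetricSpace X]

lemma exists_far (hX : ¬ Bornology.IsBounded (Set.univ : Set X)) (p : X) (R : ℝ) :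
    ∃ x : X, R < dist x p := by
  by_contra hc
  push_neg at hc
  exact hX ((Metric.isBounded_iff_subset_closedBall p).2
    ⟨R, fun x _ => Metric.mem_closedBall.2 (hc x)⟩)

/-- there is a sequence going to infinity but staying below any prescribed
function tending to infinity -/
lemma exists_slow_seq (hX : ¬ Bornology.IsBounded (Set.univ : Set X)) (p : X)
    (f : ℕ → ℝ) (hf : Tendsto f atTop atTop) :
    ∃ w : ℕ → X, Tendsto (fun n => dist (w n) p) atTop atTop ∧
      ∀ n, dist (w n) p ≤ max 0 (f n) := by
  classical
  -- a strictly increasing unbounded sequence of distances starting from 0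
  have key : ∃ q : ℕ → X, dist (q 0) p = 0 ∧
      ∀ m : ℕ, max ((m : ℝ) + 1) (dist (q m) p) < dist (q (m + 1)) p := by
    refine ⟨fun m => Nat.rec p (fun m qm => Classical.choose
      (exists_far hX p (max ((m : ℝ) + 1) (dist qm p)))) m, by simp, fun m => ?_⟩
    exact Classical.choose_spec (exists_far hX p _)
  obtain ⟨q, hq0, hqs⟩ := key
  set s : ℕ → ℝ := fun m => dist (q m) p with hs
  have hsmono : StrictMono s := strictMono_nat_of_lt_succ fun m =>
    lt_of_le_of_lt (le_max_right _ _) (hqs m)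
  have hsge : ∀ m : ℕ, (m : ℝ) ≤ s m := by
    intro m
    induction m with
    | zero => simp [hs, hq0]
    | succ m _ => exact le_of_lt (lt_of_le_of_lt (by exact_mod_cast le_max_left _ _) (hqs m))
  set k : ℕ → ℕ := fun n => Nat.findGreatest (fun m => s m ≤ max 0 (f n)) n with hk
  refine ⟨fun n => q (k n), ?_, fun n => ?_⟩
  · rw [tendsto_atTop]
    intro R
    obtain ⟨m, hm⟩ := exists_nat_ge R
    have h1 : ∀ᶠ n in atTop, s m ≤ max 0 (f n) :=
      (hf.eventually_ge_atTop (s m)).mono fun n h => h.trans (le_max_right _ _)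
    have h2 : ∀ᶠ n in atTop, m ≤ n := eventually_ge_atTop m
    filter_upwards [h1, h2] with n hn1 hn2
    have : m ≤ k n := Nat.le_findGreatest hn2 hn1
    calc R ≤ (m : ℝ) := hm
      _ ≤ s m := hsge m
      _ ≤ s (k n) := hsmono.monotone this
  · have h0 : s 0 ≤ max 0 (f n) := by rw [hs]; simp [hq0]
    exact Nat.findGreatest_spec (P := fun m => s m ≤ max 0 (f n)) (Nat.zero_le n) h0

end unbounded

section gapsystem
variable {X : Type*} [MetricSpace X]

/-- the key dichotomy lemma: if distances avoid gaps `(A k, B k)` with `A/ρ → 0`,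
`B/ρ → ∞`, then any sequence with converging normalized distance converges to 0. -/
lemma tendsto_zero_of_gap {p : X} (ρ A B : ℕ → ℝ) (x : ℕ → X)
    (hρ : ∀ k, 0 < ρ k) (hgap : ∀ k, dist (x k) p ≤ A k ∨ B k ≤ dist (x k) p)
    (hA : Tendsto (fun k => A k / ρ k) atTop (𝓝 0))
    (hB : Tendsto (fun k => B k / ρ k) atTop atTop)
    {L : ℝ} (hx : Tendsto (fun k => dist (x k) p / ρ k) atTop (𝓝 L)) :
    Tendsto (fun k => dist (x k) p / ρ k) atTop (𝓝 0) := by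
  have hev : ∀ᶠ k in atTop, dist (x k) p ≤ A k := by
    by_contra hc
    rw [not_eventually] at hc
    have hc' : ∃ᶠ k in atTop, B k ≤ dist (x k) p :=
      hc.mono fun k hk => (hgap k).resolve_left hk
    have h1 : ∀ᶠ k in atTop, L + 1 < B k / ρ k := hB.eventually_gt_atTop (L + 1)
    have h2 : ∀ᶠ k in atTop, dist (x k) p / ρ k < L + 1 :=
      hx.eventually_lt_const (lt_add_one L)
    obtain ⟨k, hk1, hk2, hk3⟩ := (hc'.and_eventually (h1.and h2)).exists
    have hle : B k / ρ k ≤ dist (x k) p / ρ k :=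
      div_le_div_of_nonneg_right hk1 (hρ k).le |>.trans_eq rfl
    linarith
  refine squeeze_zero' (Eventually.of_forall fun k => div_nonneg dist_nonneg (hρ k).le)
    (hev.mono fun k hk => div_le_div_of_nonneg_right hk (hρ k).le) hA

/-- extraction of a gap system from strong porosity at infinity -/
lemma exists_gap_system (hX : ¬ Bornology.IsBounded (Set.univ : Set X)) (p : X)
    (hpor : StronglyPorousAtInfty (Set.range fun x : X => dist x p)) :
    ∃ α β : ℕ → ℝ,
      (∀ n, 0 ≤ α n) ∧
      (∀ n : ℕ, α n < 2 / ((n : ℝ) + 2) * β n) ∧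
      (∀ n : ℕ, ((n : ℝ) + 1) / 2 ≤ β n) ∧
      (∀ n : ℕ, ∀ z ∈ Set.Ioo (α n) (β n), z ∉ (Set.range fun x : X => dist x p)) ∧
      Tendsto α atTop atTop := by
  set S := Set.range fun x : X => dist x p with hS
  have hcob : atTop.IsCoboundedUnder (· ≤ ·) (fun h => gapLen S h / h) := by
    apply Filter.IsBoundedUnder.isCoboundedUnder_le
    refine ⟨0, ?_⟩
    rw [eventually_map]
    filter_upwards [eventually_gt_atTop (0:ℝ)] with h hh
    exact div_nonneg (gapLen_nonneg S h) hh.le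
  have main : ∀ n : ℕ, ∃ ab : ℝ × ℝ,
      0 ≤ ab.1 ∧ ab.1 < 2 / ((n : ℝ) + 2) * ab.2 ∧ ((n : ℝ) + 1) / 2 ≤ ab.2 ∧
      ∀ z ∈ Set.Ioo ab.1 ab.2, z ∉ S := by
    intro n
    set N := (n : ℝ) with hN
    have hN0 : 0 ≤ N := Nat.cast_nonneg n
    have hδ : (0 : ℝ) < 1 / (N + 2) := by positivity
    have hlt : 1 - 1 / (N + 2) < porosityAtInfty S := by
      rw [hpor]; linarith
    have hfreq := frequently_lt_of_lt_limsup hcob hlt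
    obtain ⟨h, hgap, hge⟩ := (hfreq.and_eventually (eventually_ge_atTop (N + 1))).exists
    have hh0 : 0 < h := by linarith
    have hgap' : (1 - 1 / (N + 2)) * h < gapLen S h := (lt_div_iff₀ hh0).1 hgap
    obtain ⟨a, b, hab, hsub, hba⟩ := exists_gap hgap'
    have hab' : a < b := by
      have : 0 < (1 - 1 / (N + 2)) * h := by
        apply mul_pos _ hh0
        have h2 : (2:ℝ) ≤ N + 2 := by linarith
        have : 1 / (N + 2) ≤ 1 / 2 :=
          one_div_le_one_div_of_le two_pos h2
        linarith
      linarith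
    obtain ⟨ha0, hbh⟩ := Ioo_bounds hab' (fun z hz => (hsub hz).1)
    have hkey : (N + 2) * (b - a) > (N + 1) * h := by
      have e : (N + 2) * (1 - 1 / (N + 2)) = N + 1 := by
        field_simp
        linarith
      nlinarith [hba]
    refine ⟨(a, b), ha0, ?_, ?_, fun z hz => (hsub hz).2⟩
    · have hb0 : (0:ℝ) < b := by nlinarith
      have hba' : (N + 2) * a < b := by nlinarith
      rw [div_mul_eq_mul_div, lt_div_iff₀ (by linarith : (0:ℝ) < N + 2)]
      linarith
    · nlinarith
  choose ab hab1 hab2 hab3 hab4 using main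
  set α : ℕ → ℝ := fun n => (ab n).1 with hα
  set β : ℕ → ℝ := fun n => (ab n).2 with hβ
  have hβtop : Tendsto β atTop atTop := by
    apply tendsto_atTop_mono (fun n => hab3 n)
    apply Tendsto.atTop_div_const two_pos
    exact tendsto_atTop_add_const_right _ 1 tendsto_natCast_atTop_atTop
  have hαtop : Tendsto α atTop atTop := by
    rw [tendsto_atTop]
    intro R
    obtain ⟨x, hx⟩ := exists_far hX p R
    filter_upwards [hβtop.eventually_gt_atTop (dist x p)] with n hn
    have hmem : dist x p ∈ S := ⟨x, rfl⟩
    have : dist x p ∉ Set.Ioo (α n) (β n) := fun hin => hab4 n _ hin hmem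
    rw [Set.mem_Ioo, not_and_or, not_lt, not_lt] at this
    rcases this with h' | h'
    · linarith
    · linarith
  exact ⟨α, β, hab1, hab2, hab3, hab4, hαtop⟩

end gapsystem

section pack
variable {X : Type*} [MetricSpace X]

/-- if every admissible sequence has normalized distance tending to 0, the set of all
admissible sequences is a pretangent space in which everything is equivalent. -/
lemma adm_pretangent_pack {p : X} (r' : ℕ → ℝ) (hr' : ∀ n, 0 < r' n)
    (hzero : ∀ x : ℕ → X, SeqAdm dist p r' x →
      Tendsto (fun n => dist (x n) p / r' n) atTop (𝓝 0)) :
    IsPretangent dist p r' {x | SeqAdm dist p r' x} ∧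
      ∀ x ∈ {x : ℕ → X | SeqAdm dist p r' x}, ∀ y ∈ {x : ℕ → X | SeqAdm dist p r' x},
        SeqEquiv dist r' x y := by
  have pair : ∀ x ∈ {x : ℕ → X | SeqAdm dist p r' x}, ∀ y ∈ {x : ℕ → X | SeqAdm dist p r' x},
      SeqEquiv dist r' x y := by
    intro x hx y hy
    have h := (hzero x hx).add (hzero y hy)
    rw [add_zero] at h
    apply squeeze_zero (dist_div_nonneg hr' x y) _ h
    intro n
    rw [← add_div]
    exact div_le_div_of_nonneg_right (dist_triangle_right _ _ _) (hr' n).le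
  refine ⟨⟨⟨fun x hx => hx, fun x _ y hy _ => hy, fun x hx y hy => ⟨0, pair x hx y hy⟩⟩, ?_⟩, pair⟩
  intro D hD hsub
  exact Set.Subset.antisymm (fun y hy => hD.1 y hy) hsub

/-- (i) → (ii) -/
lemma porous_imp_single (hX : ¬ Bornology.IsBounded (Set.univ : Set X)) (p : X)
    (hpor : StronglyPorousAtInfty (Set.range fun x : X => dist x p)) :
    ∃ r : ℕ → ℝ, ScalingSeq r ∧ ∃ C : Set (ℕ → X), IsTangent dist p r C ∧
      C.Nonempty ∧ ∀ x ∈ C, ∀ y ∈ C, SeqEquiv dist r x y := by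
  obtain ⟨α, β, hab1, hab2, hab3, hab4, hαtop⟩ := exists_gap_system hX p hpor
  set sq : ℕ → ℝ := fun n => (Nat.sqrt n : ℝ) with hsq
  have hsqtop : Tendsto sq atTop atTop := by
    apply tendsto_natCast_atTop_atTop.comp
    rw [tendsto_atTop]
    intro b
    filter_upwards [eventually_ge_atTop (b * b)] with n hn
    exact Nat.le_sqrt.2 hn
  set r : ℕ → ℝ := fun n => max 1 (α n * sq n) with hrdef
  have hrpos : ∀ n, 0 < r n := fun n => lt_of_lt_of_le one_pos (le_max_left _ _)
  have hev : ∀ᶠ n in atTop, 1 ≤ α n ∧ 1 ≤ sq n :=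
    (hαtop.eventually_ge_atTop 1).and (hsqtop.eventually_ge_atTop 1)
  have hreq : ∀ᶠ n in atTop, r n = α n * sq n := by
    filter_upwards [hev] with n ⟨h1, h2⟩
    exact max_eq_right (by nlinarith)
  have hrtop : Tendsto r atTop atTop := by
    apply tendsto_atTop_mono' atTop _ hαtop
    filter_upwards [hev] with n ⟨h1, h2⟩
    calc α n ≤ α n * sq n := le_mul_of_one_le_right (by linarith) h2
      _ ≤ r n := le_max_right _ _
  have hαr : Tendsto (fun n => α n / r n) atTop (𝓝 0) := by
    apply Tendsto.congr' _ hsqtop.inv_tendsto_atTop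
    filter_upwards [hev, hreq] with n ⟨h1, h2⟩ he
    show (sq n)⁻¹ = α n / r n
    rw [he, ← div_div, div_self (by linarith : α n ≠ 0), one_div]
  have hβr : Tendsto (fun n => β n / r n) atTop atTop := by
    apply tendsto_atTop_mono' atTop _ (hsqtop.atTop_div_const two_pos)
    filter_upwards [hev, hreq] with n ⟨h1, h2⟩ he
    have hsq2 : sq n * sq n ≤ (n : ℝ) := by
      have := Nat.sqrt_le' n
      rw [hsq]
      push_cast
      exact_mod_cast by exact_mod_cast Nat.cast_le.2 (by nlinarith [Nat.sqrt_le' n] : Nat.sqrt n * Nat.sqrt n ≤ n)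
    have hkey : α n * ((n : ℝ) + 2) < 2 * β n := by
      have h := hab2 n
      rw [div_mul_eq_mul_div, lt_div_iff₀ (by positivity : (0:ℝ) < (n:ℝ) + 2)] at h
      linarith
    rw [he, div_le_div_iff₀ two_pos (by nlinarith : (0:ℝ) < α n * sq n)]
    nlinarith [mul_le_mul_of_nonneg_left hsq2 (by linarith : (0:ℝ) ≤ α n)]
  have hgapd : ∀ (n : ℕ) (z : X), dist z p ≤ α n ∨ β n ≤ dist z p := by
    intro n z
    rcases le_or_gt (dist z p) (α n) with h | h
    · exact Or.inl h
    rcases le_or_gt (β n) (dist z p) with h' | h'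
    · exact Or.inr h'
    exact absurd ⟨z, rfl⟩ (hab4 n (dist z p) ⟨h, h'⟩)
  have hall : ∀ (m : ℕ → ℕ), Tendsto m atTop atTop → ∀ x : ℕ → X,
      (∃ L, Tendsto (fun k => dist (x k) p / r (m k)) atTop (𝓝 L)) →
      Tendsto (fun k => dist (x k) p / r (m k)) atTop (𝓝 0) := by
    rintro m hm x ⟨L, hL⟩
    exact tendsto_zero_of_gap (fun k => r (m k)) (fun k => α (m k)) (fun k => β (m k)) x
      (fun k => hrpos (m k)) (fun k => hgapd (m k) (x k)) (hαr.comp hm) (hβr.comp hm) hL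
  -- the pretangent space: all admissible sequences
  set C : Set (ℕ → X) := {x | SeqAdm dist p r x} with hC
  obtain ⟨hpre, hequiv⟩ := adm_pretangent_pack r hrpos (fun x hx => hall id tendsto_id x hx.2)
  -- nonemptiness
  obtain ⟨w, hwtop, hwle⟩ := exists_slow_seq hX p α hαtop
  have hwle' : ∀ n, dist (w n) p ≤ α n := fun n => (hwle n).trans_eq (max_eq_right (hab1 n))
  have hw0 : Tendsto (fun n => dist (w n) p / r n) atTop (𝓝 0) := by
    apply squeeze_zero (fun n => div_nonneg dist_nonneg (hrpos n).le) _ hαr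
    exact fun n => div_le_div_of_nonneg_right (hwle' n) (hrpos n).le
  have hwC : w ∈ C := ⟨hwtop, 0, hw0⟩
  refine ⟨r, ⟨hrpos, hrtop⟩, C, ⟨⟨hpre, ?_⟩, ⟨w, hwC⟩, hequiv⟩⟩
  -- tangency
  intro nk hnk
  have hnktop : Tendsto nk atTop atTop := hnk.tendsto_atTop
  have hset : subImage dist p (fun k => r (nk k)) nk C = {y | SeqAdm dist p (fun k => r (nk k)) y} := by
    apply Set.Subset.antisymm
    · exact fun y hy => hy.1
    · intro y hy
      refine ⟨hy, w, hwC, ?_⟩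
      have hy0 : Tendsto (fun k => dist (y k) p / r (nk k)) atTop (𝓝 0) :=
        hall nk hnktop y hy.2
      have hw0' : Tendsto (fun k => dist (w (nk k)) p / r (nk k)) atTop (𝓝 0) :=
        hw0.comp hnktop
      have h := hw0'.add hy0
      rw [add_zero] at h
      apply squeeze_zero (fun k => div_nonneg dist_nonneg (hrpos (nk k)).le) _ h
      intro k
      rw [← add_div]
      exact div_le_div_of_nonneg_right (dist_triangle_right _ _ _) (hrpos (nk k)).le
  rw [hset]
  exact (adm_pretangent_pack (fun k => r (nk k)) (fun k => hrpos (nk k))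
    (fun y hy => hall nk hnktop y hy.2)).1

end pack

section rho
variable {X : Type*} [MetricSpace X] {p : X} {r : ℕ → ℝ}

lemma seqDist_tendsto {C : Set (ℕ → X)} (hC : IsCliqueSet dist p r C) {x y : ℕ → X}
    (hx : x ∈ C) (hy : y ∈ C) :
    Tendsto (fun n => dist (x n) (y n) / r n) atTop (𝓝 (seqDist dist r x y)) := by
  obtain ⟨L, hL⟩ := hC.2.2 x hx y hy
  rw [seqDist, hL.limUnder_eq]
  exact hL

lemma seqDist_nonneg' (hr : ∀ n, 0 < r n) {C : Set (ℕ → X)} (hC : IsCliqueSet dist p r C)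
    {x y : ℕ → X} (hx : x ∈ C) (hy : y ∈ C) : 0 ≤ seqDist dist r x y :=
  ge_of_tendsto' (seqDist_tendsto hC hx hy) (fun n => div_nonneg dist_nonneg (hr n).le)

lemma seqDist_comm' {C : Set (ℕ → X)} (hC : IsCliqueSet dist p r C) {x y : ℕ → X}
    (hx : x ∈ C) (hy : y ∈ C) : seqDist dist r x y = seqDist dist r y x := by
  have h := (seqDist_tendsto hC hx hy).congr
    (fun n => by rw [dist_comm] : ∀ n, dist (x n) (y n) / r n = dist (y n) (x n) / r n)
  exact (h.limUnder_eq).symm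

lemma seqDist_triangle' {C : Set (ℕ → X)} (hC : IsCliqueSet dist p r C) {x y z : ℕ → X}
    (hx : x ∈ C) (hy : y ∈ C) (hz : z ∈ C)
    (hr : ∀ n, 0 < r n) :
    seqDist dist r x z ≤ seqDist dist r x y + seqDist dist r y z := by
  refine le_of_tendsto_of_tendsto' (seqDist_tendsto hC hx hz)
    ((seqDist_tendsto hC hx hy).add (seqDist_tendsto hC hy hz)) (fun n => ?_)
  rw [← add_div]
  exact div_le_div_of_nonneg_right (dist_triangle _ _ _) (hr n).le

lemma seqDist_self' (x : ℕ → X) : seqDist dist r x x = 0 :=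
  Filter.Tendsto.limUnder_eq (show Tendsto (fun n => dist (x n) (x n) / r n) atTop (𝓝 0) by
    simpa using (tendsto_const_nhds : Tendsto (fun _ : ℕ => (0:ℝ)) atTop (𝓝 0)))

lemma seqDist_eq_zero_of_equiv {x y : ℕ → X} (h : SeqEquiv dist r x y) :
    seqDist dist r x y = 0 :=
  Filter.Tendsto.limUnder_eq h

end rho

section impl234
variable {X : Type*} [MetricSpace X]

/-- (ii) → (iii) -/
lemma single_imp_finite {p : X}
    (h : ∃ r : ℕ → ℝ, ScalingSeq r ∧ ∃ C : Set (ℕ → X), IsTangent dist p r C ∧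
        C.Nonempty ∧ ∀ x ∈ C, ∀ y ∈ C, SeqEquiv dist r x y) :
    ∃ r : ℕ → ℝ, ScalingSeq r ∧ ∃ C : Set (ℕ → X), IsTangent dist p r C ∧
      ∃ n : ℕ, ∀ f : Fin (n + 1) → (ℕ → X), (∀ k, f k ∈ C) →
        ∃ k l, k ≠ l ∧ SeqEquiv dist r (f k) (f l) := by
  obtain ⟨r, hr, C, hC, _, hequiv⟩ := h
  exact ⟨r, hr, C, hC, 1, fun f hf =>
    ⟨0, 1, by decide, hequiv (f 0) (hf 0) (f 1) (hf 1)⟩⟩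

/-- pigeonhole: a bound on pairwise non-equivalent elements forces an infinite class -/
lemma exists_infinite_class {r : ℕ → ℝ} {C : Set (ℕ → X)} {n : ℕ}
    (hn : ∀ f : Fin (n + 1) → (ℕ → X), (∀ k, f k ∈ C) →
      ∃ k l, k ≠ l ∧ SeqEquiv dist r (f k) (f l))
    {u : ℕ → ℕ → X} (hu : ∀ j, u j ∈ C) :
    ∃ j0 : ℕ, {i : ℕ | SeqEquiv dist r (u i) (u j0)}.Infinite := by
  by_contra hcon
  push_neg at hcon
  have claim : ∀ m : ℕ, ∃ ψ : Fin m → ℕ,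
      ∀ k l : Fin m, k ≠ l → ¬ SeqEquiv dist r (u (ψ k)) (u (ψ l)) := by
    intro m
    induction m with
    | zero => exact ⟨Fin.elim0, fun k => k.elim0⟩
    | succ m ih =>
      obtain ⟨ψ, hψ⟩ := ih
      have hT : (⋃ k : Fin m, ({i : ℕ | SeqEquiv dist r (u i) (u (ψ k))} ∪
          {i : ℕ | SeqEquiv dist r (u (ψ k)) (u i)})).Finite := by
        apply Set.finite_iUnion
        intro k
        exact (hcon (ψ k)).union ((hcon (ψ k)).subset fun i hi => seqEquiv_symm hi)
      obtain ⟨i, hi⟩ := hT.infinite_compl.nonempty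
      rw [Set.mem_compl_iff, Set.mem_iUnion] at hi
      push_neg at hi
      refine ⟨Fin.cons i ψ, fun k l hkl h => ?_⟩
      rcases Fin.eq_zero_or_eq_succ k with rfl | ⟨k', rfl⟩ <;>
        rcases Fin.eq_zero_or_eq_succ l with rfl | ⟨l', rfl⟩
      · exact hkl rfl
      · rw [Fin.cons_zero, Fin.cons_succ] at h
        exact (hi l') (Set.mem_union_left _ h)
      · rw [Fin.cons_zero, Fin.cons_succ] at h
        exact (hi k') (Set.mem_union_right _ h)
      · rw [Fin.cons_succ, Fin.cons_succ] at h
        exact hψ k' l' (fun he => hkl (by rw [he])) h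
  obtain ⟨ψ, hψ⟩ := claim (n + 1)
  obtain ⟨k, l, hkl, heq⟩ := hn (fun k => u (ψ k)) (fun k => hu (ψ k))
  exact hψ k l hkl heq

/-- (iii) → (iv) -/
lemma finite_imp_compact {p : X}
    (h : ∃ r : ℕ → ℝ, ScalingSeq r ∧ ∃ C : Set (ℕ → X), IsTangent dist p r C ∧
        ∃ n : ℕ, ∀ f : Fin (n + 1) → (ℕ → X), (∀ k, f k ∈ C) →
          ∃ k l, k ≠ l ∧ SeqEquiv dist r (f k) (f l)) :
    ∃ r : ℕ → ℝ, ScalingSeq r ∧ ∃ C : Set (ℕ → X), IsTangent dist p r C ∧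
      ∀ u : ℕ → (ℕ → X), (∀ j, u j ∈ C) →
        ∃ v ∈ C, ∃ φ : ℕ → ℕ, StrictMono φ ∧
          Tendsto (fun j => seqDist dist r (u (φ j)) v) atTop (𝓝 0) := by
  obtain ⟨r, hr, C, hC, n, hn⟩ := h
  refine ⟨r, hr, C, hC, fun u hu => ?_⟩
  obtain ⟨j0, hinf⟩ := exists_infinite_class hn hu
  refine ⟨u j0, hu j0, Nat.nth (fun i => SeqEquiv dist r (u i) (u j0)),
    Nat.nth_strictMono hinf, ?_⟩
  have hz : ∀ j, seqDist dist r (u (Nat.nth (fun i => SeqEquiv dist r (u i) (u j0)) j)) (u j0)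
      = 0 := fun j => seqDist_eq_zero_of_equiv (Nat.nth_mem_of_infinite hinf j)
  exact tendsto_const_nhds.congr (fun j => (hz j).symm)

/-- (iv) → (v) -/
lemma compact_imp_bdd_sep {p : X}
    (h : ∃ r : ℕ → ℝ, ScalingSeq r ∧ ∃ C : Set (ℕ → X), IsTangent dist p r C ∧
        ∀ u : ℕ → (ℕ → X), (∀ j, u j ∈ C) →
          ∃ v ∈ C, ∃ φ : ℕ → ℕ, StrictMono φ ∧
            Tendsto (fun j => seqDist dist r (u (φ j)) v) atTop (𝓝 0)) :
    ∃ r : ℕ → ℝ, ScalingSeq r ∧ ∃ C : Set (ℕ → X), IsTangent dist p r C ∧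
      (∃ M : ℝ, ∀ x ∈ C, ∀ y ∈ C, seqDist dist r x y ≤ M) ∧
      (∃ u : ℕ → (ℕ → X), ∀ x ∈ C, ∀ ε > (0 : ℝ), ∃ j : ℕ,
        u j ∈ C ∧ seqDist dist r x (u j) < ε) := by
  classical
  obtain ⟨r, hr, C, hC, hcpt⟩ := h
  have hrp : ∀ n, 0 < r n := hr.1
  have hclique : IsCliqueSet dist p r C := hC.1.1
  rcases Set.eq_empty_or_nonempty C with hem | ⟨x₀, hx₀⟩
  · refine ⟨r, hr, C, hC, ⟨0, ?_⟩, ⟨fun _ _ => p, ?_⟩⟩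
    · intro x hx; rw [hem] at hx; exact absurd hx (Set.notMem_empty x)
    · intro x hx; rw [hem] at hx; exact absurd hx (Set.notMem_empty x)
  refine ⟨r, hr, C, hC, ?_, ?_⟩
  · -- boundedness
    by_contra hb
    push_neg at hb
    have far : ∀ j : ℕ, ∃ z ∈ C, (j : ℝ) < seqDist dist r x₀ z := by
      intro j
      obtain ⟨x, hx, y, hy, hxy⟩ := hb (2 * j)
      by_cases hc : (j : ℝ) < seqDist dist r x₀ x
      · exact ⟨x, hx, hc⟩
      · push_neg at hc
        refine ⟨y, hy, ?_⟩
        have tri := seqDist_triangle' hclique hx hx₀ hy hrp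
        rw [← seqDist_comm' hclique hx₀ hx] at tri
        push_cast at hxy ⊢
        linarith
    choose z hzC hz using far
    obtain ⟨v, hv, φ, hφ, hconv⟩ := hcpt z hzC
    set B := seqDist dist r x₀ v with hB
    have hev : ∀ᶠ j in atTop, seqDist dist r (z (φ j)) v < 1 :=
      hconv.eventually_lt_const one_pos
    obtain ⟨j, hj1, hj2⟩ := (hev.and (eventually_ge_atTop (Nat.ceil (B + 1)))).exists
    have h1 : (j : ℝ) ≥ B + 1 := (Nat.le_ceil (B + 1)).trans (Nat.cast_le.2 hj2)
    have h2 : (j : ℝ) ≤ (φ j : ℝ) := Nat.cast_le.2 hφ.le_apply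
    have h3 := hz (φ j)
    have tri := seqDist_triangle' hclique hx₀ hv (hzC (φ j)) hrp
    rw [← seqDist_comm' hclique (hzC (φ j)) hv] at tri
    linarith
  · -- separability
    have claim : ∀ k : ℕ, ∃ F : Set (ℕ → X), F.Finite ∧ F ⊆ C ∧
        ∀ x ∈ C, ∃ y ∈ F, seqDist dist r x y < 1 / ((k : ℝ) + 1) := by
      intro k
      by_contra hno
      push_neg at hno
      have hyp : ∀ s : Finset (ℕ → X), (∀ x ∈ s, x ∈ C) →
          ∃ y, y ∈ C ∧ ∀ x ∈ s, 1 / ((k : ℝ) + 1) ≤ seqDist dist r x y := by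
        intro s hs
        obtain ⟨x, hxC, hxall⟩ := hno ↑s s.finite_toSet (fun y hy => hs y hy)
        exact ⟨x, hxC, fun y hy =>
          (hxall y hy).trans_eq (seqDist_comm' hclique hxC (hs y hy))⟩
      obtain ⟨f, hfC, hfsep⟩ := exists_seq_of_forall_finset_exists (· ∈ C)
        (fun a b => 1 / ((k : ℝ) + 1) ≤ seqDist dist r a b) hyp
      · obtain ⟨v, hv, φ, hφ, hconv⟩ := hcpt f hfC
        have hε : (0:ℝ) < 1 / ((k : ℝ) + 1) / 2 := by positivity
        obtain ⟨N, hN⟩ := eventually_atTop.1 (hconv.eventually_lt_const hε)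
        have hsep := hfsep (φ N) (φ (N + 1)) (hφ (Nat.lt_succ_self N))
        have tri := seqDist_triangle' hclique (hfC (φ N)) hv (hfC (φ (N + 1))) hrp
        rw [← seqDist_comm' hclique (hfC (φ (N + 1))) hv] at tri
        have e1 := hN N (le_refl N)
        have e2 := hN (N + 1) (Nat.le_succ N)
        linarith
    choose F hFfin hFsub hFnet using claim
    have hcnt : (insert x₀ (⋃ k, F k) : Set (ℕ → X)).Countable :=
      (Set.countable_iUnion (fun k => (hFfin k).countable)).insert x₀
    obtain ⟨u, hu⟩ := hcnt.exists_eq_range (Set.insert_nonempty _ _)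
    refine ⟨u, fun x hx ε hε => ?_⟩
    obtain ⟨k, hk⟩ := exists_nat_one_div_lt hε
    obtain ⟨y, hyF, hyd⟩ := hFnet k x hx
    have hyD : y ∈ insert x₀ (⋃ k, F k) := Set.mem_insert_of_mem _ (Set.mem_iUnion.2 ⟨k, hyF⟩)
    rw [hu] at hyD
    obtain ⟨j, hj⟩ := hyD
    refine ⟨j, ?_, ?_⟩
    · rw [hj]; exact hFsub k hyF
    · rw [hj]; exact hyd.trans hk
end impl234

section hard
variable {X : Type*} [MetricSpace X]

lemma abs_div_dist_sub {ρ : ℝ} (hρ : 0 < ρ) (a b c : X) :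
    |dist a b / ρ - dist a c / ρ| ≤ dist b c / ρ := by
  rw [div_sub_div_same, abs_div, abs_of_pos hρ]
  apply div_le_div_of_nonneg_right _ hρ.le
  calc |dist a b - dist a c| = |dist b a - dist c a| := by rw [dist_comm a b, dist_comm a c]
    _ ≤ dist b c := abs_dist_sub_le _ _ _

/-- every pretangent space (w.r.t. a scaling sequence) is nonempty -/
lemma pretangent_nonempty (hX : ¬ Bornology.IsBounded (Set.univ : Set X)) {p : X}
    {r : ℕ → ℝ} (hr : ScalingSeq r) {C : Set (ℕ → X)}
    (hpre : IsPretangent dist p r C) : C.Nonempty := by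
  have hrp := hr.1
  have hsq : Tendsto (fun n => Real.sqrt (r n)) atTop atTop := by
    rw [tendsto_atTop]
    intro b
    filter_upwards [hr.2.eventually_ge_atTop ((max b 0) ^ 2)] with n hn
    calc b ≤ max b 0 := le_max_left _ _
      _ = Real.sqrt ((max b 0) ^ 2) := (Real.sqrt_sq (le_max_right _ _)).symm
      _ ≤ Real.sqrt (r n) := Real.sqrt_le_sqrt hn
  obtain ⟨w, hwtop, hwle⟩ := exists_slow_seq hX p _ hsq
  have hw0 : Tendsto (fun n => dist (w n) p / r n) atTop (𝓝 0) := by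
    have hlim : Tendsto (fun n => 1 / Real.sqrt (r n)) atTop (𝓝 0) := by
      have := hsq.inv_tendsto_atTop; simp only [one_div]; exact this
    apply squeeze_zero (fun n => div_nonneg dist_nonneg (hrp n).le) _ hlim
    intro n
    calc dist (w n) p / r n ≤ Real.sqrt (r n) / r n :=
          div_le_div_of_nonneg_right
            ((hwle n).trans_eq (max_eq_right (Real.sqrt_nonneg _))) (hrp n).le
      _ = 1 / Real.sqrt (r n) := Real.sqrt_div_self'
  have hwadm : SeqAdm dist p r w := ⟨hwtop, 0, hw0⟩
  by_contra hne
  rw [Set.not_nonempty_iff_eq_empty] at hne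
  set D : Set (ℕ → X) := {y | SeqAdm dist p r y ∧ SeqEquiv dist r w y} with hD
  have hDclique : IsCliqueSet dist p r D := by
    refine ⟨fun x hx => hx.1, fun x hx z hz hxz => ⟨hz, seqEquiv_trans hrp hx.2 hxz⟩,
      fun x hx z hz => ⟨0, seqEquiv_trans hrp (seqEquiv_symm hx.2) hz.2⟩⟩
  have := hpre.2 D hDclique (hne ▸ Set.empty_subset D)
  have hwD : w ∈ D := ⟨hwadm, seqEquiv_refl w⟩
  rw [this, hne] at hwD
  exact Set.notMem_empty w hwD

/-- (v) → (i) -/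
lemma bdd_sep_imp_porous (hX : ¬ Bornology.IsBounded (Set.univ : Set X)) (p : X)
    (hv : ∃ r : ℕ → ℝ, ScalingSeq r ∧ ∃ C : Set (ℕ → X), IsTangent dist p r C ∧
      (∃ M : ℝ, ∀ x ∈ C, ∀ y ∈ C, seqDist dist r x y ≤ M) ∧
      (∃ u : ℕ → (ℕ → X), ∀ x ∈ C, ∀ ε > (0 : ℝ), ∃ j : ℕ,
        u j ∈ C ∧ seqDist dist r x (u j) < ε)) :
    StronglyPorousAtInfty (Set.range fun x : X => dist x p) := by
  classical
  obtain ⟨r, hr, C, hC, ⟨M, hM⟩, ⟨u, husep⟩⟩ := hv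
  have hrp : ∀ n, 0 < r n := hr.1
  have hclique : IsCliqueSet dist p r C := hC.1.1
  set S := Set.range fun x : X => dist x p with hS
  set f : ℝ → ℝ := fun h => gapLen S h / h with hf
  have hub : ∀ᶠ h in atTop, f h ≤ 1 := by
    filter_upwards [eventually_ge_atTop (1:ℝ)] with h hh
    rw [hf]
    exact div_le_one_of_le₀ (gapLen_le S (by linarith)) (by linarith)
  have hbdd : atTop.IsBoundedUnder (· ≤ ·) f := ⟨1, eventually_map.2 hub⟩
  have hlb : ∀ᶠ h in atTop, 0 ≤ f h := by
    filter_upwards [eventually_ge_atTop (1:ℝ)] with h hh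
    exact div_nonneg (gapLen_nonneg S h) (by linarith)
  have hcob : atTop.IsCoboundedUnder (· ≤ ·) f :=
    Filter.IsBoundedUnder.isCoboundedUnder_le ⟨0, eventually_map.2 hlb⟩
  rw [StronglyPorousAtInfty]
  have hle1 : porosityAtInfty S ≤ 1 := Filter.limsup_le_of_le hcob hub
  have hge0 : 0 ≤ porosityAtInfty S :=
    Filter.le_limsup_of_frequently_le hlb.frequently hbdd
  by_contra hne
  have hlt : porosityAtInfty S < 1 := lt_of_le_of_ne hle1 hne
  -- the "syndetic" consequence of non-porosity
  set q : ℝ := (porosityAtInfty S + 1) / 2 with hq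
  have hq1 : q < 1 := by rw [hq]; linarith
  have hq0 : (0:ℝ) ≤ q := by rw [hq]; linarith
  have hqgt : porosityAtInfty S < q := by rw [hq]; linarith
  have hev : ∀ᶠ h in atTop, f h < q := eventually_lt_of_limsup_lt hqgt hbdd
  obtain ⟨H0, hH0⟩ := eventually_atTop.1 (hev.and (eventually_ge_atTop (1:ℝ)))
  set H : ℝ := max H0 1 with hH
  set c : ℝ := (1 - q) / 2 with hc
  have hc0 : 0 < c := by rw [hc]; linarith
  have hc1 : c < 1 := by rw [hc]; linarith
  have hsynd : ∀ b ≥ H, ∃ z : X, dist z p ∈ Set.Ioo (c * b) b := by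
    intro b hb
    have hb1 : (1:ℝ) ≤ b := le_trans (le_max_right H0 1) hb
    have hb0 : (0:ℝ) < b := by linarith
    by_contra hno
    push_neg at hno
    have hsub : Set.Ioo (c * b) b ⊆ Set.Icc 0 b \ S := by
      intro z hz
      refine ⟨⟨?_, hz.2.le⟩, ?_⟩
      · have : 0 < c * b := mul_pos hc0 hb0
        linarith [hz.1]
      · rintro ⟨x, rfl⟩
        exact absurd hz (by simpa using hno x)
    have hgl : b - c * b ≤ gapLen S b :=
      le_gapLen S (by nlinarith) hsub
    have hfb := (hH0 b (le_trans (le_max_left H0 1) hb)).1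
    rw [hf] at hfb
    have : gapLen S b < q * b := (div_lt_iff₀ hb0).1 hfb
    nlinarith
  -- setup in the tangent space
  obtain ⟨x₀, hx₀⟩ := pretangent_nonempty hX hr hC.1
  obtain ⟨L, hL⟩ := (hclique.1 x₀ hx₀).2
  have hL0 : 0 ≤ L := ge_of_tendsto' hL (fun n => div_nonneg dist_nonneg (hrp n).le)
  have hM0 : 0 ≤ M :=
    le_trans (seqDist_nonneg' hrp hclique hx₀ hx₀) (hM x₀ hx₀ x₀ hx₀)
  set u' : ℕ → (ℕ → X) := fun j => if u j ∈ C then u j else x₀ with hu'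
  have hu'C : ∀ j, u' j ∈ C := by
    intro j; rw [hu']; dsimp only; split_ifs with h; exacts [h, hx₀]
  have hu'dense : ∀ x ∈ C, ∀ ε > (0:ℝ), ∃ j, seqDist dist r x (u' j) < ε := by
    intro x hx ε hε
    obtain ⟨j, hjC, hjd⟩ := husep x hx ε hε
    exact ⟨j, by rw [hu']; dsimp only; rw [if_pos hjC]; exact hjd⟩
  set t : ℝ := (L + M + 2) / c with htdef
  have hct : c * t = L + M + 2 := mul_div_cancel₀ _ (ne_of_gt hc0)
  have ht0 : 0 < t := div_pos (by linarith) hc0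
  -- limits of the countable dense family
  have hℓ : ∀ j, ∃ ℓj : ℝ, Tendsto (fun n => dist (u' j n) p / r n) atTop (𝓝 ℓj) ∧
      ℓj ≤ L + M := by
    intro j
    obtain ⟨ℓj, hℓj⟩ := (hclique.1 (u' j) (hu'C j)).2
    refine ⟨ℓj, hℓj, ?_⟩
    have htri : ∀ n, dist (u' j n) p / r n ≤
        dist (u' j n) (x₀ n) / r n + dist (x₀ n) p / r n := by
      intro n
      rw [← add_div]
      exact div_le_div_of_nonneg_right (dist_triangle _ _ _) (hrp n).le
    have h2 := (seqDist_tendsto hclique (hu'C j) hx₀).add hL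
    have := le_of_tendsto_of_tendsto' hℓj h2 htri
    have hcomm : seqDist dist r (u' j) x₀ = seqDist dist r x₀ (u' j) :=
      seqDist_comm' hclique (hu'C j) hx₀
    have hb := hM x₀ hx₀ (u' j) (hu'C j)
    linarith [this, hcomm ▸ hb]
  choose ℓ hℓlim hℓle using hℓ
  -- the auxiliary far-away sequence
  set P : ℕ → Prop := fun n => ∃ z : X, dist z p ∈ Set.Ioo (c * (t * r n)) (t * r n) with hP
  set y' : ℕ → X := fun n => if hn : P n then Classical.choose hn else p with hy'
  have hevP : ∀ᶠ n in atTop, P n := by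
    filter_upwards [(hr.2.const_mul_atTop ht0).eventually_ge_atTop H] with n hn
    obtain ⟨z, hz⟩ := hsynd (t * r n) hn
    exact ⟨z, hz⟩
  have ha : ∀ᶠ n in atTop, dist (y' n) p ∈ Set.Ioo (c * (t * r n)) (t * r n) := by
    filter_upwards [hevP] with n hn
    rw [hy']; dsimp only; rw [dif_pos hn]
    exact Classical.choose_spec hn
  have hadiv : ∀ᶠ n in atTop, dist (y' n) p / r n ∈ Set.Ioo (c * t) t := by
    filter_upwards [ha] with n hn
    constructor
    · rw [lt_div_iff₀ (hrp n)]
      calc c * t * r n = c * (t * r n) := by ring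
        _ < dist (y' n) p := hn.1
    · rw [div_lt_iff₀ (hrp n)]
      exact hn.2
  -- the coordinates to compactify
  set K : ℝ := t + (L + M + 1) with hK
  have hK0 : (0:ℝ) ≤ K := by rw [hK]; linarith
  have htK : t ≤ K := by rw [hK]; linarith
  set g : ℕ → ℕ → ℝ := fun j n =>
    Nat.casesOn j (dist (y' n) p / r n) (fun j' => dist (y' n) (u' j' n) / r n) with hg
  have hgbound : ∀ j, ∀ᶠ n in atTop, g j n ∈ Set.Icc 0 K := by
    intro j
    cases j with
    | zero =>
      filter_upwards [hadiv] with n hn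
      exact ⟨div_nonneg dist_nonneg (hrp n).le, le_trans hn.2.le htK⟩
    | succ j' =>
      have hev2 : ∀ᶠ n in atTop, dist (u' j' n) p / r n < L + M + 1 :=
        (hℓlim j').eventually_lt_const (by linarith [hℓle j'])
      filter_upwards [hadiv, hev2] with n hn1 hn2
      refine ⟨div_nonneg dist_nonneg (hrp n).le, ?_⟩
      have htri : dist (y' n) (u' j' n) / r n ≤
          dist (y' n) p / r n + dist (u' j' n) p / r n := by
        rw [← add_div]
        exact div_le_div_of_nonneg_right (dist_triangle_right _ _ _) (hrp n).le
      rw [hK]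
      have := hn1.2
      calc g (j' + 1) n = dist (y' n) (u' j' n) / r n := rfl
        _ ≤ dist (y' n) p / r n + dist (u' j' n) p / r n := htri
        _ ≤ t + (L + M + 1) := by linarith
  set G : ℕ → (ℕ → Set.Icc (0:ℝ) K) := fun n j => Set.projIcc 0 K hK0 (g j n) with hG
  obtain ⟨Λ, -, φ, hφ, hΛ⟩ := isCompact_univ.tendsto_subseq (x := G) (fun n => Set.mem_univ _)
  have hφt : Tendsto φ atTop atTop := hφ.tendsto_atTop
  have hgφ : ∀ j, Tendsto (fun k => g j (φ k)) atTop (𝓝 (Λ j)) := by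
    intro j
    have h1 : Tendsto (fun k => ((G (φ k) j : ℝ))) atTop (𝓝 (Λ j)) :=
      ((continuous_subtype_val.tendsto (Λ j)).comp ((tendsto_pi_nhds.1 hΛ) j))
    apply h1.congr'
    filter_upwards [hφt.eventually (hgbound j)] with k hk
    show ((G (φ k) j : ℝ)) = g j (φ k)
    rw [hG]; dsimp only; rw [Set.projIcc_of_mem hK0 hk]
  set r' : ℕ → ℝ := fun k => r (φ k) with hr'
  have hr'p : ∀ k, 0 < r' k := fun k => hrp (φ k)
  set y : ℕ → X := fun k => y' (φ k) with hy
  set τ : ℝ := (Λ 0 : ℝ) with hτdef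
  have hτ : Tendsto (fun k => dist (y k) p / r' k) atTop (𝓝 τ) := hgφ 0
  have hadivφ : ∀ᶠ k in atTop, dist (y k) p / r' k ∈ Set.Ioo (c * t) t :=
    hφt.eventually hadiv
  have hτc : c * t ≤ τ :=
    ge_of_tendsto hτ (hadivφ.mono fun k hk => hk.1.le)
  have hyadm : SeqAdm dist p r' y := by
    constructor
    · apply tendsto_atTop_mono' atTop _ ((hr.2.comp hφt).const_mul_atTop
        (show (0:ℝ) < c * t by rw [hct]; linarith))
      filter_upwards [hφt.eventually ha] with k hk
      calc c * t * r (φ k) = c * (t * r (φ k)) := by ring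
        _ ≤ dist (y k) p := hk.1.le
    · exact ⟨τ, hτ⟩
  have hyu : ∀ j, Tendsto (fun k => dist (y k) (u' j (φ k)) / r' k) atTop (𝓝 (Λ (j+1))) :=
    fun j => hgφ (j + 1)
  -- y is mutually stable with the image of every element of C
  have hstab : ∀ w ∈ C, ∃ Lw : ℝ,
      Tendsto (fun k => dist (y k) (w (φ k)) / r' k) atTop (𝓝 Lw) := by
    intro w hw
    apply cauchySeq_tendsto_of_complete
    rw [Metric.cauchySeq_iff]
    intro ε hε
    obtain ⟨j, hjd⟩ := hu'dense w hw (ε / 8) (by positivity)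
    have hwu : Tendsto (fun n => dist (w n) (u' j n) / r n) atTop
        (𝓝 (seqDist dist r w (u' j))) := seqDist_tendsto hclique hw (hu'C j)
    have heve : ∀ᶠ k in atTop, dist (w (φ k)) (u' j (φ k)) / r' k < ε / 4 :=
      (hwu.comp hφt).eventually_lt_const (by linarith)
    obtain ⟨N2, hN2⟩ := eventually_atTop.1 heve
    have hbc := (hyu j).cauchySeq
    rw [Metric.cauchySeq_iff] at hbc
    obtain ⟨N1, hN1⟩ := hbc (ε / 4) (by positivity)
    refine ⟨max N1 N2, fun m hm n hn => ?_⟩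
    have hm1 := le_trans (le_max_left N1 N2) hm
    have hm2 := le_trans (le_max_right N1 N2) hm
    have hn1 := le_trans (le_max_left N1 N2) hn
    have hn2 := le_trans (le_max_right N1 N2) hn
    have e1 : |dist (y m) (w (φ m)) / r' m - dist (y m) (u' j (φ m)) / r' m| ≤
        dist (w (φ m)) (u' j (φ m)) / r' m := abs_div_dist_sub (hr'p m) _ _ _
    have e2 : |dist (y n) (w (φ n)) / r' n - dist (y n) (u' j (φ n)) / r' n| ≤
        dist (w (φ n)) (u' j (φ n)) / r' n := abs_div_dist_sub (hr'p n) _ _ _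
    have e3 := hN1 m hm1 n hn1
    rw [Real.dist_eq] at e3 ⊢
    have e4 := hN2 m hm2
    have e5 := hN2 n hn2
    calc |dist (y m) (w (φ m)) / r' m - dist (y n) (w (φ n)) / r' n|
        ≤ |dist (y m) (w (φ m)) / r' m - dist (y m) (u' j (φ m)) / r' m| +
          |dist (y m) (u' j (φ m)) / r' m - dist (y n) (u' j (φ n)) / r' n| +
          |dist (y n) (u' j (φ n)) / r' n - dist (y n) (w (φ n)) / r' n| := by
            have := abs_sub_le (dist (y m) (w (φ m)) / r' m)
              (dist (y m) (u' j (φ m)) / r' m) (dist (y n) (w (φ n)) / r' n)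
            have h2 := abs_sub_le (dist (y m) (u' j (φ m)) / r' m)
              (dist (y n) (u' j (φ n)) / r' n) (dist (y n) (w (φ n)) / r' n)
            linarith
      _ < ε := by
          rw [abs_sub_comm (dist (y n) (u' j (φ n)) / r' n)] at *
          linarith [e1, e2, e3, e4, e5]
  -- use tangency along φ
  have hSI := hC.2 φ hφ
  set SI : Set (ℕ → X) := subImage dist p (fun k => r (φ k)) φ C with hSIdef
  have hSIclique : IsCliqueSet dist p r' SI := hSI.1
  set E : Set (ℕ → X) := {z | SeqAdm dist p r' z ∧ SeqEquiv dist r' y z} with hE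
  have hDclique : IsCliqueSet dist p r' (SI ∪ E) := by
    refine ⟨?_, ?_, ?_⟩
    · rintro x (hx | hx)
      exacts [hSIclique.1 x hx, hx.1]
    · rintro x (hx | hx) z hz hxz
      · exact Or.inl (hSIclique.2.1 x hx z hz hxz)
      · exact Or.inr ⟨hz, seqEquiv_trans hr'p hx.2 hxz⟩
    · rintro x (hx | hx) z (hz | hz)
      · exact hSIclique.2.2 x hx z hz
      · -- x in image, z equivalent to y
        obtain ⟨hxadm, w, hwC, hwequiv⟩ := hx
        obtain ⟨Lw, hLw⟩ := hstab w hwC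
        have hLw' : Tendsto (fun k => dist (w (φ k)) (y k) / r' k) atTop (𝓝 Lw) :=
          hLw.congr fun k => by rw [dist_comm]
        exact ⟨Lw, tendsto_dist_congr hr'p hLw' hwequiv hz.2⟩
      · -- x equivalent to y, z in image
        obtain ⟨hzadm, w, hwC, hwequiv⟩ := hz
        obtain ⟨Lw, hLw⟩ := hstab w hwC
        exact ⟨Lw, tendsto_dist_congr hr'p hLw hx.2 hwequiv⟩
      · refine ⟨0, ?_⟩
        exact seqEquiv_trans hr'p (seqEquiv_symm hx.2) hz.2
  have hmax := hSI.2 (SI ∪ E) hDclique Set.subset_union_left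
  have hyE : y ∈ SI ∪ E := Or.inr ⟨hyadm, seqEquiv_refl y⟩
  rw [hmax] at hyE
  obtain ⟨-, w, hwC, hwequiv⟩ := hyE
  -- w has normalized distance converging to τ ≥ L + M + 2, contradiction
  obtain ⟨-, ℓw, hℓw⟩ := hclique.1 w hwC
  have hcp : SeqEquiv dist r' (fun _ => p) (fun _ => p) := seqEquiv_refl _
  have hwp : Tendsto (fun k => dist (w (φ k)) p / r' k) atTop (𝓝 τ) := by
    have := tendsto_dist_congr (x := y) (y := fun _ => p) (x' := fun k => w (φ k))
      (y' := fun _ => p) hr'p hτ (seqEquiv_symm hwequiv) hcp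
    exact this
  have hℓwφ : Tendsto (fun k => dist (w (φ k)) p / r' k) atTop (𝓝 ℓw) := hℓw.comp hφt
  have hτw : ℓw = τ := tendsto_nhds_unique hℓwφ hwp
  have htri : ∀ n, dist (w n) p / r n ≤ dist (w n) (x₀ n) / r n + dist (x₀ n) p / r n := by
    intro n
    rw [← add_div]
    exact div_le_div_of_nonneg_right (dist_triangle _ _ _) (hrp n).le
  have hb2 := le_of_tendsto_of_tendsto' hℓw
    ((seqDist_tendsto hclique hwC hx₀).add hL) htri
  have hb3 := hM w hwC x₀ hx₀
  have hτfin : τ ≤ M + L := by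
    rw [← hτw]
    calc ℓw ≤ seqDist dist r w x₀ + L := hb2
      _ ≤ M + L := by linarith
  rw [hct] at hτc
  linarith

end hard
/-- **Theorem 2.3.** Let `(X,d)` be an unbounded metric space and `p ∈ X`,
and let `S_p(X) = {d(x,p) : x ∈ X}`.  The following are equivalent:
(i)   `S_p(X)` is strongly porous at infinity;
(ii)  there is a single-point tangent space `Ω^X_{∞,r̃}`;
(iii) there is a finite tangent space `Ω^X_{∞,r̃}`;
(iv)  there is a compact tangent space `Ω^X_{∞,r̃}`;
(v)   there is a bounded separable tangent space `Ω^X_{∞,r̃}`.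
Here single-point means the clique is nonempty and all its members are equivalent;
finite means some `n` bounds the number of pairwise non-equivalent members; compact is
expressed as sequential compactness w.r.t. the metric `ρ = seqDist`; bounded and
separable are expressed w.r.t. `ρ` as well. -/
theorem strongly_porous_iff_finite_tangent {X : Type*} [MetricSpace X]
    (hX : ¬ Bornology.IsBounded (Set.univ : Set X)) (p : X) :
    -- (i) ↔ (ii)
    ((StronglyPorousAtInfty (Set.range fun x : X => dist x p)) ↔
      (∃ r : ℕ → ℝ, ScalingSeq r ∧ ∃ C : Set (ℕ → X), IsTangent dist p r C ∧
        C.Nonempty ∧ ∀ x ∈ C, ∀ y ∈ C, SeqEquiv dist r x y)) ∧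
    -- (ii) ↔ (iii)
    ((∃ r : ℕ → ℝ, ScalingSeq r ∧ ∃ C : Set (ℕ → X), IsTangent dist p r C ∧
        C.Nonempty ∧ ∀ x ∈ C, ∀ y ∈ C, SeqEquiv dist r x y) ↔
      (∃ r : ℕ → ℝ, ScalingSeq r ∧ ∃ C : Set (ℕ → X), IsTangent dist p r C ∧
        ∃ n : ℕ, ∀ f : Fin (n + 1) → (ℕ → X), (∀ k, f k ∈ C) →
          ∃ k l, k ≠ l ∧ SeqEquiv dist r (f k) (f l))) ∧
    -- (iii) ↔ (iv)
    ((∃ r : ℕ → ℝ, ScalingSeq r ∧ ∃ C : Set (ℕ → X), IsTangent dist p r C ∧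
        ∃ n : ℕ, ∀ f : Fin (n + 1) → (ℕ → X), (∀ k, f k ∈ C) →
          ∃ k l, k ≠ l ∧ SeqEquiv dist r (f k) (f l)) ↔
      (∃ r : ℕ → ℝ, ScalingSeq r ∧ ∃ C : Set (ℕ → X), IsTangent dist p r C ∧
        ∀ u : ℕ → (ℕ → X), (∀ j, u j ∈ C) →
          ∃ v ∈ C, ∃ φ : ℕ → ℕ, StrictMono φ ∧
            Tendsto (fun j => seqDist dist r (u (φ j)) v) atTop (𝓝 0))) ∧
    -- (iv) ↔ (v)
    ((∃ r : ℕ → ℝ, ScalingSeq r ∧ ∃ C : Set (ℕ → X), IsTangent dist p r C ∧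
        ∀ u : ℕ → (ℕ → X), (∀ j, u j ∈ C) →
          ∃ v ∈ C, ∃ φ : ℕ → ℕ, StrictMono φ ∧
            Tendsto (fun j => seqDist dist r (u (φ j)) v) atTop (𝓝 0)) ↔
      (∃ r : ℕ → ℝ, ScalingSeq r ∧ ∃ C : Set (ℕ → X), IsTangent dist p r C ∧
        (∃ M : ℝ, ∀ x ∈ C, ∀ y ∈ C, seqDist dist r x y ≤ M) ∧
        (∃ u : ℕ → (ℕ → X), ∀ x ∈ C, ∀ ε > (0 : ℝ), ∃ j : ℕ,
          u j ∈ C ∧ seqDist dist r x (u j) < ε))) := by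
  have h12 := porous_imp_single hX p
  have h23 := @single_imp_finite X _ p
  have h34 := @finite_imp_compact X _ p
  have h45 := @compact_imp_bdd_sep X _ p
  have h51 := bdd_sep_imp_porous hX p
  exact ⟨⟨h12, fun h => h51 (h45 (h34 (h23 h)))⟩,
    ⟨h23, fun h => h12 (h51 (h45 (h34 h)))⟩,
    ⟨h34, fun h => h23 (h12 (h51 (h45 h)))⟩,
    ⟨h45, fun h => h34 (h23 (h12 (h51 h)))⟩⟩
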